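/- Let a be a nonzero real number and let y₊, y₋ ∈ ℝ with y₊ − a·y₋ ≠ 0. Let t ∈ ℝ be such that t·y₊ + 1 ≠ 0 and a·t·y₋ + 1 ≠ 0, and set u′ = y₊/(t·y₊ + 1), v′ = y₋/(a·t·y₋ + 1), u = (u′ + v′)/2, v = (u′ − v′)/2 (so that the image of the point y₊P₊ + y₋P₋ under the Möbius transformation with matrix N(t)P₊ + N(at)P₋ is u + jv). Then u² − v² + ((a−1)·y₊·y₋/(y₊ − a·y₋))·u − ((a+1)·y₊·y₋/(y₊ − a·y₋))·v = 0. -/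

import Mathlib

/-- Let `a ≠ 0` and `y₊ - a·y₋ ≠ 0` (here `yp = y₊`, `ym = y₋`), and
let `t` be such that `t·y₊ + 1 ≠ 0` and `a·t·y₋ + 1 ≠ 0`.  Set `u′ = y₊/(t·y₊+1)`,
`v′ = y₋/(a·t·y₋+1)`, `u = (u′+v′)/2` and `v = (u′-v′)/2`, so that the image of the point
`y₊P₊ + y₋P₋` under the Möbius transformation with matrix `N(t)P₊ + N(at)P₋` is `u + jv`.
Then `u² - v² + ((a-1)·y₊·y₋/(y₊-a·y₋))·u - ((a+1)·y₊·y₋/(y₊-a·y₋))·v = 0`. -/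
theorem double_parabolic_orbit_equation
    (a yp ym t u' v' u v : ℝ)
    (ha : a ≠ 0) (hy : yp - a * ym ≠ 0)
    (h1 : t * yp + 1 ≠ 0) (h2 : a * t * ym + 1 ≠ 0)
    (hu' : u' = yp / (t * yp + 1)) (hv' : v' = ym / (a * t * ym + 1))
    (hu : u = (u' + v') / 2) (hv : v = (u' - v') / 2) :
    u ^ 2 - v ^ 2 + ((a - 1) * yp * ym / (yp - a * ym)) * u
      - ((a + 1) * yp * ym / (yp - a * ym)) * v = 0 := by
  subst hu hv hu' hv'
  rw [div_add_div _ _ h1 h2, div_sub_div _ _ h1 h2]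
  field_simp
  ring
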